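/- Let (T,bag) be a regular rooted tree decomposition of a finite graph G that is strongly (q,k)-unbreakable. Let x be a node of T and S ⊆ cone(x) with |S| ≤ k. Then for all u,v ∈ bag(x) \ S: u and v are connected in G[cone(x)] − S (the graph G[cone(x)] with the vertices of S removed) if and only if u and v are connected in the S-restricted bag graph bgraph_S(x). -/

import Mathlib

/-- A finite rooted tree, encoded by its parent function. -/
structure RTree (ι : Type*) where
  root : ι
  parent : ι → ι
  parent_root : parent root = root
  reaches_root : ∀ x : ι, ∃ n : ℕ, parent^[n] x = root

namespace RTree

variable {ι : Type*} (T : RTree ι)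

/-- `T.Anc x y` means `x` is an ancestor of `y` (every node is its own ancestor). -/
def Anc (x y : ι) : Prop := ∃ n : ℕ, T.parent^[n] y = x

/-- `T.IsChild y x` means `y` is a child of `x`. -/
def IsChild (y x : ι) : Prop := y ≠ T.root ∧ T.parent y = x

/-- The underlying undirected graph of the rooted tree. -/
def treeGraph : SimpleGraph ι where
  Adj x y := x ≠ y ∧ (T.IsChild x y ∨ T.IsChild y x)
  symm := ⟨fun x y h => ⟨h.1.symm, h.2.symm⟩⟩
  loopless := ⟨fun x h => h.1 rfl⟩

end RTree

/-- Two vertices are connected by a walk all of whose vertices lie in `U`. -/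
def ConnIn {V : Type*} (G : SimpleGraph V) (U : Set V) (a b : V) : Prop :=
  ∃ p : G.Walk a b, ∀ w ∈ p.support, w ∈ U

theorem ConnIn.symm {V : Type*} {G : SimpleGraph V} {U : Set V} {a b : V}
    (h : ConnIn G U a b) : ConnIn G U b a := by
  obtain ⟨p, hp⟩ := h
  refine ⟨p.reverse, fun w hw => hp w ?_⟩
  rwa [SimpleGraph.Walk.support_reverse, List.mem_reverse] at hw

/-- `X` is `(q,k)`-unbreakable in the induced subgraph `G[U]`: for every separation `(A,B)`
of `G[U]` of order at most `k`, one of the two sides contains at most `q` vertices of `X`. -/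
def UnbreakableIn {V : Type*} (G : SimpleGraph V) (U X : Set V) (q k : ℕ) : Prop :=
  ∀ A B : Set V, A ⊆ U → B ⊆ U → A ∪ B = U →
    (∀ a ∈ A \ B, ∀ b ∈ B \ A, ¬ G.Adj a b) →
    (A ∩ B).ncard ≤ k →
    (A ∩ X).ncard ≤ q ∨ (B ∩ X).ncard ≤ q

/-- A rooted tree decomposition of the graph `G`, with nodes indexed by `ι`. -/
structure TreeDecomp {V : Type*} (G : SimpleGraph V) (ι : Type*) extends RTree ι where
  bag : ι → Set V
  /-- (T1) for every vertex, the set of nodes whose bag contains it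
  is a nonempty subtree of the tree. -/
  bag_subtree : ∀ u : V, ((toRTree.treeGraph).induce {x : ι | u ∈ bag x}).Connected
  /-- (T2) every edge is contained in some bag. -/
  bag_edge : ∀ u v : V, G.Adj u v → ∃ x : ι, u ∈ bag x ∧ v ∈ bag x

namespace TreeDecomp

variable {V ι : Type*} {G : SimpleGraph V} (D : TreeDecomp G ι)

/-- The adhesion of a node: intersection of its bag with the bag of its parent
(empty at the root). -/
def adh (x : ι) : Set V :=
  {v : V | x ≠ D.root ∧ v ∈ D.bag (D.parent x) ∧ v ∈ D.bag x}

/-- The margin of a node. -/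
def mrg (x : ι) : Set V := D.bag x \ D.adh x

/-- The cone at a node: union of the bags at all its descendants. -/
def cone (x : ι) : Set V := {v : V | ∃ y : ι, D.toRTree.Anc x y ∧ v ∈ D.bag y}

/-- The component at a node. -/
def comp (x : ι) : Set V := D.cone x \ D.adh x

/-- A tree decomposition is regular if every non-root node has nonempty margin,
connected component, and every adhesion vertex has a neighbour in the component. -/
def Regular : Prop :=
  ∀ x : ι, x ≠ D.root →
    (D.mrg x).Nonempty ∧
    (G.induce (D.comp x)).Connected ∧
    ∀ u ∈ D.adh x, ∃ w ∈ D.comp x, G.Adj u w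

end TreeDecomp

namespace TreeDecomp

variable {V ι : Type*} {G : SimpleGraph V} (D : TreeDecomp G ι)

/-- The `S`-restricted bag graph at `x`: the vertices of `S ∩ bag(x)` and all children are
removed from the bag graph, and for each child `y` of `x`, two distinct vertices
`u, v ∈ adh(y) \ S` are joined by an edge whenever `G[cone(y)]` contains a `u`–`v` path
disjoint from `S`. (It is encoded as a graph on `V` whose edges lie inside `bag(x) \ S`.) -/
def bgraphS (x : ι) (S : Set V) : SimpleGraph V where
  Adj u v := u ≠ v ∧ u ∈ D.bag x \ S ∧ v ∈ D.bag x \ S ∧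
    (G.Adj u v ∨ ∃ y : ι, D.toRTree.IsChild y x ∧
        u ∈ D.adh y \ S ∧ v ∈ D.adh y \ S ∧ ConnIn G (D.cone y \ S) u v)
  symm := by
    constructor
    rintro u v ⟨hne, hu, hv, h⟩
    refine ⟨hne.symm, hv, hu, ?_⟩
    rcases h with h | ⟨y, hy, huy, hvy, hc⟩
    · exact Or.inl h.symm
    · exact Or.inr ⟨y, hy, hvy, huy, hc.symm⟩
  loopless := ⟨fun u h => h.1 rfl⟩

end TreeDecomp


section Aux

open SimpleGraph

namespace RTree

variable {ι : Type*} (T : RTree ι)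

lemma iterate_root (n : ℕ) : T.parent^[n] T.root = T.root :=
  Function.iterate_fixed T.parent_root n

lemma eq_root_of_fix {y : ι} {n : ℕ} (hn : 0 < n) (h : T.parent^[n] y = y) :
    y = T.root := by
  obtain ⟨m, hm⟩ := T.reaches_root y
  have hcyc : ∀ k : ℕ, T.parent^[k * n] y = y := by
    intro k
    induction k with
    | zero => simp
    | succ k ih => rw [Nat.succ_mul, Function.iterate_add_apply, h, ih]
  have hmn : m ≤ m * n := Nat.le_mul_of_pos_right m hn
  calc y = T.parent^[m * n] y := (hcyc m).symm
    _ = T.parent^[m * n - m] (T.parent^[m] y) := by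
        rw [← Function.iterate_add_apply, Nat.sub_add_cancel hmn]
    _ = T.root := by rw [hm, T.iterate_root]

lemma anc_refl (x : ι) : T.Anc x x := ⟨0, rfl⟩

lemma anc_parent_of_child {y x z : ι} (h : T.IsChild y x) (hz : T.Anc y z) :
    T.Anc x z := by
  obtain ⟨n, hn⟩ := hz
  exact ⟨n + 1, by rw [Function.iterate_succ_apply', hn, h.2]⟩

lemma not_anc_parent {y x : ι} (h : T.IsChild y x) : ¬ T.Anc y x := by
  rintro ⟨n, hn⟩
  apply h.1
  apply T.eq_root_of_fix (n := n + 1) (Nat.succ_pos n)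
  rw [Function.iterate_succ_apply, h.2, hn]

lemma crossing {y x w w' : ι} (h : T.IsChild y x) (hadj : T.treeGraph.Adj w w')
    (hw : T.Anc y w) (hw' : ¬ T.Anc y w') : w = y ∧ w' = x := by
  obtain ⟨n, hn⟩ := hw
  rcases hadj.2 with hc | hc
  · cases n with
    | zero =>
      have hn0 : w = y := hn
      exact ⟨hn0, by rw [← hc.2, hn0, h.2]⟩
    | succ m =>
      exact (hw' ⟨m, by rw [← hc.2, ← Function.iterate_succ_apply]; exact hn⟩).elim
  · exact (hw' ⟨n + 1, by rw [Function.iterate_succ_apply, hc.2]; exact hn⟩).elim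

lemma walk_cross {P : Set ι} {y x : ι} (h : T.IsChild y x) :
    ∀ {a b : ↑P} (_p : (T.treeGraph.induce P).Walk a b),
      T.Anc y a.1 → ¬ T.Anc y b.1 → y ∈ P ∧ x ∈ P := by
  intro a b p
  induction p with
  | nil => exact fun ha hb => absurd ha hb
  | @cons a c b hadj q ih =>
    intro ha hb
    by_cases hcy : T.Anc y c.1
    · exact ih hcy hb
    · obtain ⟨h1, h2⟩ := T.crossing h hadj ha hcy
      exact ⟨h1 ▸ a.2, h2 ▸ c.2⟩

end RTree

lemma ConnIn.rfl' {V : Type*} {G : SimpleGraph V} {U : Set V} {a : V} (ha : a ∈ U) :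
    ConnIn G U a a :=
  ⟨SimpleGraph.Walk.nil, by simp [ha]⟩

lemma ConnIn.trans' {V : Type*} {G : SimpleGraph V} {U : Set V} {a b c : V}
    (h1 : ConnIn G U a b) (h2 : ConnIn G U b c) : ConnIn G U a c := by
  obtain ⟨p, hp⟩ := h1
  obtain ⟨q, hq⟩ := h2
  refine ⟨p.append q, fun w hw => ?_⟩
  rw [SimpleGraph.Walk.mem_support_append_iff] at hw
  exact hw.elim (hp w) (hq w)

lemma ConnIn.mono {V : Type*} {G : SimpleGraph V} {U U' : Set V} {a b : V}
    (hU : U ⊆ U') (h : ConnIn G U a b) : ConnIn G U' a b := by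
  obtain ⟨p, hp⟩ := h
  exact ⟨p, fun w hw => hU (hp w hw)⟩

lemma ConnIn.cons' {V : Type*} {G : SimpleGraph V} {U : Set V} {a b c : V}
    (hadj : G.Adj a b) (ha : a ∈ U) (h : ConnIn G U b c) : ConnIn G U a c := by
  obtain ⟨p, hp⟩ := h
  refine ⟨SimpleGraph.Walk.cons hadj p, fun w hw => ?_⟩
  rw [SimpleGraph.Walk.support_cons] at hw
  rcases List.mem_cons.mp hw with hw' | hw'
  · exact hw' ▸ ha
  · exact hp w hw'

lemma ConnIn.single {V : Type*} {G : SimpleGraph V} {U : Set V} {a b : V}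
    (hadj : G.Adj a b) (ha : a ∈ U) (hb : b ∈ U) : ConnIn G U a b :=
  ConnIn.cons' hadj ha (ConnIn.rfl' hb)

namespace TreeDecomp

variable {V ι : Type*} {G : SimpleGraph V} (D : TreeDecomp G ι)

lemma bag_subset_cone (x : ι) : D.bag x ⊆ D.cone x :=
  fun _v hv => ⟨x, D.toRTree.anc_refl x, hv⟩

lemma cone_mono {y x : ι} (h : D.toRTree.IsChild y x) : D.cone y ⊆ D.cone x := by
  rintro v ⟨z, hz, hvz⟩
  exact ⟨z, D.toRTree.anc_parent_of_child h hz, hvz⟩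

lemma adh_subset_cone (y : ι) : D.adh y ⊆ D.cone y :=
  fun v hv => D.bag_subset_cone y hv.2.2

lemma adh_subset_parent {y x : ι} (h : D.toRTree.IsChild y x) : D.adh y ⊆ D.bag x := by
  intro v hv
  rw [← h.2]
  exact hv.2.1

lemma mem_bag_of_sep {y x : ι} (h : D.toRTree.IsChild y x) {u : V} {z z₂ : ι}
    (hz : D.toRTree.Anc y z) (huz : u ∈ D.bag z)
    (hz₂ : ¬ D.toRTree.Anc y z₂) (huz₂ : u ∈ D.bag z₂) :
    u ∈ D.bag y ∧ u ∈ D.bag x := by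
  obtain ⟨p⟩ := (D.bag_subtree u).preconnected ⟨z, huz⟩ ⟨z₂, huz₂⟩
  exact D.toRTree.walk_cross h p hz hz₂

lemma mem_adh_of_cone_bag {y x : ι} (h : D.toRTree.IsChild y x) {v : V}
    (hc : v ∈ D.cone y) (hb : v ∈ D.bag x) : v ∈ D.adh y := by
  obtain ⟨z, hz, hvz⟩ := hc
  obtain ⟨h1, h2⟩ := D.mem_bag_of_sep h hz hvz (D.toRTree.not_anc_parent h) hb
  exact ⟨h.1, by rw [h.2]; exact h2, h1⟩

lemma adj_comp_mem_cone {y x : ι} (h : D.toRTree.IsChild y x) {c d : V}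
    (hc : c ∈ D.comp y) (hadj : G.Adj c d) : d ∈ D.cone y := by
  obtain ⟨z, hcz, hdz⟩ := D.bag_edge c d hadj
  by_cases hz : D.toRTree.Anc y z
  · exact ⟨z, hz, hdz⟩
  · obtain ⟨z', hz', hcz'⟩ := hc.1
    obtain ⟨h1, h2⟩ := D.mem_bag_of_sep h hz' hcz' hz hcz
    exact absurd (⟨h.1, by rw [h.2]; exact h2, h1⟩ : c ∈ D.adh y) hc.2

lemma cone_cases {x : ι} {v : V} (hv : v ∈ D.cone x) (hb : v ∉ D.bag x) :
    ∃ y, D.toRTree.IsChild y x ∧ v ∈ D.comp y := by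
  obtain ⟨z, ⟨n, hn⟩, hvz⟩ := hv
  induction n generalizing z with
  | zero => exact absurd (hn ▸ hvz) hb
  | succ n ih =>
    rw [Function.iterate_succ_apply'] at hn
    by_cases hr : D.toRTree.parent^[n] z = D.toRTree.root
    · have hx : x = D.toRTree.root := by rw [← hn, hr, D.toRTree.parent_root]
      exact ih z hvz (hr.trans hx.symm)
    · refine ⟨D.toRTree.parent^[n] z, ⟨hr, hn⟩, ⟨z, ⟨n, rfl⟩, hvz⟩, ?_⟩
      intro hadh
      exact hb (by rw [← hn]; exact hadh.2.1)

lemma forwardAux (x : ι) (S : Set V) :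
    ∀ {c v : V} (p : G.Walk c v), (∀ w ∈ p.support, w ∈ D.cone x \ S) →
      v ∈ D.bag x \ S →
      (c ∈ D.bag x \ S → (D.bgraphS x S).Reachable c v) ∧
      (∀ y, D.toRTree.IsChild y x → c ∈ D.comp y → c ∉ S →
        ∃ b, b ∈ D.adh y \ S ∧ ConnIn G (D.cone y \ S) c b ∧
          (D.bgraphS x S).Reachable b v) := by
  intro c v p
  induction p with
  | nil =>
    intro _ hv
    refine ⟨fun _ => SimpleGraph.Reachable.refl _, ?_⟩
    intro y hy hcomp _
    exact absurd (D.mem_adh_of_cone_bag hy hcomp.1 hv.1) hcomp.2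
  | @cons c d v hadj q ih =>
    intro hsupp hv
    have hsuppq : ∀ w ∈ q.support, w ∈ D.cone x \ S := fun w hw =>
      hsupp w (by rw [SimpleGraph.Walk.support_cons]; exact List.mem_cons_of_mem _ hw)
    have hd : d ∈ D.cone x \ S := hsuppq d q.start_mem_support
    obtain ⟨ih1, ih2⟩ := ih hsuppq hv
    constructor
    · intro hc
      by_cases hdb : d ∈ D.bag x
      · have hedge : (D.bgraphS x S).Adj c d :=
          ⟨hadj.ne, hc, ⟨hdb, hd.2⟩, Or.inl hadj⟩
        exact hedge.reachable.trans (ih1 ⟨hdb, hd.2⟩)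
      · obtain ⟨y, hy, hdcomp⟩ := D.cone_cases hd.1 hdb
        obtain ⟨b, hb, hconn, hreach⟩ := ih2 y hy hdcomp hd.2
        have hcadh : c ∈ D.adh y :=
          D.mem_adh_of_cone_bag hy (D.adj_comp_mem_cone hy hdcomp hadj.symm) hc.1
        have hcconn : ConnIn G (D.cone y \ S) c b :=
          ConnIn.cons' hadj ⟨D.adh_subset_cone y hcadh, hc.2⟩ hconn
        by_cases hcb : c = b
        · exact hcb ▸ hreach
        · have hedge : (D.bgraphS x S).Adj c b :=
            ⟨hcb, hc, ⟨D.adh_subset_parent hy hb.1, hb.2⟩,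
              Or.inr ⟨y, hy, ⟨hcadh, hc.2⟩, hb, hcconn⟩⟩
          exact hedge.reachable.trans hreach
    · intro y hy hcomp hcS
      have hdcone : d ∈ D.cone y := D.adj_comp_mem_cone hy hcomp hadj
      by_cases hdb : d ∈ D.bag x
      · have hdadh : d ∈ D.adh y := D.mem_adh_of_cone_bag hy hdcone hdb
        refine ⟨d, ⟨hdadh, hd.2⟩, ?_, ih1 ⟨hdb, hd.2⟩⟩
        exact ConnIn.single hadj ⟨hcomp.1, hcS⟩ ⟨D.adh_subset_cone y hdadh, hd.2⟩
      · have hdcomp : d ∈ D.comp y :=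
          ⟨hdcone, fun hadh => hdb (D.adh_subset_parent hy hadh)⟩
        obtain ⟨b, hb, hconn, hreach⟩ := ih2 y hy hdcomp hd.2
        exact ⟨b, hb, ConnIn.cons' hadj ⟨hcomp.1, hcS⟩ hconn, hreach⟩

lemma edge_connIn {x : ι} {S : Set V} {a b : V} (hadj : (D.bgraphS x S).Adj a b) :
    ConnIn G (D.cone x \ S) a b := by
  obtain ⟨hne, ha, hb, h | ⟨y, hy, hay, hby, hconn⟩⟩ := hadj
  · exact ConnIn.single h ⟨D.bag_subset_cone x ha.1, ha.2⟩ ⟨D.bag_subset_cone x hb.1, hb.2⟩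
  · exact hconn.mono (fun w hw => ⟨D.cone_mono hy hw.1, hw.2⟩)

lemma backwardAux (x : ι) (S : Set V) :
    ∀ {a v : V} (_p : (D.bgraphS x S).Walk a v), v ∈ D.cone x \ S →
      ConnIn G (D.cone x \ S) a v := by
  intro a v p
  induction p with
  | nil => exact fun hv => ConnIn.rfl' hv
  | @cons a m v hadj q ih =>
    intro hv
    exact (D.edge_connIn hadj).trans' (ih hv)

end TreeDecomp

end Aux

/-- For a regular, strongly `(q,k)`-unbreakable rooted tree
decomposition, a node `x` and `S ⊆ cone(x)` with `|S| ≤ k`, two vertices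
`u, v ∈ bag(x) \ S` are connected in `G[cone(x)] − S` iff they are connected in the
`S`-restricted bag graph `bgraph_S(x)`. -/
theorem stmt5 {V ι : Type*} [Fintype V] [Fintype ι] {G : SimpleGraph V}
    (D : TreeDecomp G ι) (hreg : D.Regular) (q k : ℕ)
    (hunb : ∀ x : ι, UnbreakableIn G (D.cone x) (D.bag x) q k)
    (x : ι) (S : Set V) (hScone : S ⊆ D.cone x) (hSk : S.ncard ≤ k)
    (u v : V) (hu : u ∈ D.bag x \ S) (hv : v ∈ D.bag x \ S) :
    ConnIn G (D.cone x \ S) u v ↔ (D.bgraphS x S).Reachable u v := by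
  constructor
  · rintro ⟨p, hp⟩
    exact (D.forwardAux x S p hp hv).1 hu
  · intro h
    obtain ⟨p⟩ := h
    exact D.backwardAux x S p ⟨D.bag_subset_cone x hv.1, hv.2⟩
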